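/- Let {(time(i,j,·), prob(i,j,·))}_{i,j} be a finite collection of strategy forests (several per arm) satisfying ∑_{(i,j,u) : time(i,j,u) = t} prob(i,j,u) ≤ 1 for every t ∈ {1,…,B}. Then there exist maps time'(i,j,·) : S_i → {1,…,B} ∪ {∞} with time'(i,j,u) ≤ time(i,j,u) for all (i,j,u) and time'(i,j,u) = ∞ exactly when time(i,j,u) = ∞, such that each pair (time'(i,j,·), prob(i,j,·)) is again a strategy forest for arm i and the following two properties hold: (i) for every (i,j,u) with time'(i,j,u) ≠ ∞, the head of u with respect to time' satisfies time'(i,j,Head'(i,j,u)) ≥ 2·depth(Head'(i,j,u)); (ii) for every t ∈ {1,…,B}, ∑_{(i,j,u) : time'(i,j,u) = t} prob(i,j,u) ≤ 3. -/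

import Mathlib

open Finset

def gfAux {S : Type*} (dep : S → ℕ) (par : S → S) (tm : S → WithTop ℕ) : ℕ → S → WithTop ℕ
  | 0, u => tm u
  | d+1, u => if ((2 * dep u : ℕ) : WithTop ℕ) ≤ tm u then tm u
              else gfAux dep par tm d (par u) + 1

def gfT {S : Type*} (dep : S → ℕ) (par : S → S) (tm : S → WithTop ℕ) (u : S) : WithTop ℕ :=
  gfAux dep par tm (dep u) u

lemma gfT_root {S : Type*} (dep : S → ℕ) (par : S → S) (tm : S → WithTop ℕ) (u : S)
    (h : dep u = 0) : gfT dep par tm u = tm u := by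
  rw [gfT, h]; rfl

lemma gfT_rec {S : Type*} (dep : S → ℕ) (par : S → S) (tm : S → WithTop ℕ) (u : S)
    (h : dep u = dep (par u) + 1) :
    gfT dep par tm u = if ((2 * dep u : ℕ) : WithTop ℕ) ≤ tm u then tm u
      else gfT dep par tm (par u) + 1 := by
  have key : ∀ d, gfAux dep par tm (d+1) u
      = if ((2 * dep u : ℕ) : WithTop ℕ) ≤ tm u then tm u
        else gfAux dep par tm d (par u) + 1 := fun d => rfl
  rw [gfT, h, key, ← h]; rfl

lemma exists_natCast {x : WithTop ℕ} (h : x ≠ ⊤) : ∃ a : ℕ, x = (a : WithTop ℕ) := by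
  cases x with
  | top => exact absurd rfl h
  | coe a => exact ⟨a, (Nat.cast_withTop a).symm⟩

/-- A strategy forest for arm `i` (see statement 5's context). -/
def IsStrategyForest {S : Type*} {n : ℕ} (B : ℕ) (arm : S → Fin n) (ρ : Fin n → S)
    (parent : S → S) (p : S → ℝ) (i : Fin n)
    (time : S → WithTop ℕ) (prob : S → ℝ) : Prop :=
  (∀ u, arm u = i → 0 ≤ prob u) ∧
  (∀ u, arm u = i → time u ≠ ⊤ → 1 ≤ time u ∧ time u ≤ (B : WithTop ℕ)) ∧
  (∀ u, arm u = i → u ≠ ρ i →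
    (time (parent u) = ⊤ → time u = ⊤) ∧
    (time u ≠ ⊤ → time (parent u) + 1 ≤ time u) ∧
    (time u ≠ ⊤ → prob u = p u * prob (parent u)) ∧
    (time u = ⊤ → prob u = 0))

/-- `h` is the head of `u`: `h` is the least-depth ancestor of `u` reachable
from `u` by a chain of tree edges along which the times are consecutive
(so the contiguity breaks at `h`, i.e. `time h ≠ time (parent h) + 1`). -/
def IsHeadOf {S : Type*} (parent : S → S) (time : S → WithTop ℕ) (h u : S) : Prop :=
  (∃ k : ℕ, parent^[k] u = h ∧
    ∀ m < k, time (parent^[m] u) = time (parent^[m + 1] u) + 1) ∧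
  time h ≠ time (parent h) + 1

/-- (Gap filling.) Given a collection of strategy forests with
total load at most 1 at each time, the times can be only decreased (keeping
`∞` exactly where it was) so that each forest remains a strategy forest, every
head `h` of a played state satisfies `time'(h) ≥ 2·depth(h)`, and the total
load at each time is at most 3. -/
theorem stmt_6 {S : Type*} [Fintype S] [DecidableEq S] {n : ℕ}
    (B : ℕ)
    (arm : S → Fin n) (ρ : Fin n → S) (parent : S → S) (depth : S → ℕ) (p : S → ℝ)
    (hρ : ∀ i, arm (ρ i) = i)
    (hparent_arm : ∀ u, arm (parent u) = arm u)
    (hparent_root : ∀ i, parent (ρ i) = ρ i)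
    (hdepth_root : ∀ i, depth (ρ i) = 0)
    (hdepth : ∀ u, u ≠ ρ (arm u) → depth u = depth (parent u) + 1)
    (hp : ∀ u, 0 ≤ p u ∧ p u ≤ 1)
    (hpsum : ∀ v : S, ∑ u ∈ univ.filter (fun u => u ≠ ρ (arm u) ∧ parent u = v), p u ≤ 1)
    (J : Fin n → ℕ) (time : Fin n → ℕ → S → WithTop ℕ) (prob : Fin n → ℕ → S → ℝ)
    (hSF : ∀ i, ∀ j < J i, IsStrategyForest B arm ρ parent p i (time i j) (prob i j))
    (hload : ∀ t ∈ Icc 1 B,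
      ∑ u : S, ∑ j ∈ (range (J (arm u))).filter
        (fun j => time (arm u) j u = (t : WithTop ℕ)), prob (arm u) j u ≤ 1) :
    ∃ time' : Fin n → ℕ → S → WithTop ℕ,
      (∀ i, ∀ j < J i, ∀ u, arm u = i →
        time' i j u ≤ time i j u ∧ (time' i j u = ⊤ ↔ time i j u = ⊤)) ∧
      (∀ i, ∀ j < J i, IsStrategyForest B arm ρ parent p i (time' i j) (prob i j)) ∧
      (∀ i, ∀ j < J i, ∀ u, arm u = i → time' i j u ≠ ⊤ →
        ∀ h, IsHeadOf parent (time' i j) h u →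
          ((2 * depth h : ℕ) : WithTop ℕ) ≤ time' i j h) ∧
      (∀ t ∈ Icc 1 B,
        ∑ u : S, ∑ j ∈ (range (J (arm u))).filter
          (fun j => time' (arm u) j u = (t : WithTop ℕ)), prob (arm u) j u ≤ 3) := by
  classical
  -- basic structural facts
  have hroot0 : ∀ u : S, depth u = 0 → u = ρ (arm u) := by
    intro u h
    by_contra hu
    have := hdepth u hu
    omega
  have hrootd : ∀ u : S, u = ρ (arm u) → depth u = 0 := by
    intro u h
    rw [h, hdepth_root]
  have harmIt : ∀ (m : ℕ) (u : S), arm (parent^[m] u) = arm u := by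
    intro m
    induction m with
    | zero => intro u; rfl
    | succ m ih => intro u; rw [Function.iterate_succ_apply', hparent_arm]; exact ih u
  -- the master inductive bundle
  have Q : ∀ (i : Fin n) (j : ℕ), j < J i → ∀ (N : ℕ) (u : S), depth u ≤ N → arm u = i →
      gfT depth parent (time i j) u ≤ time i j u ∧
      (time i j u = ⊤ ↔ gfT depth parent (time i j) u = ⊤) ∧
      (time i j u ≠ ⊤ → ((depth u + 1 : ℕ) : WithTop ℕ) ≤ gfT depth parent (time i j) u) ∧
      (u ≠ ρ i → time i j u ≠ ⊤ →
        gfT depth parent (time i j) (parent u) + 1 ≤ gfT depth parent (time i j) u) := by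
    intro i j hj
    have rootcase : ∀ u : S, u = ρ (arm u) → arm u = i →
        gfT depth parent (time i j) u ≤ time i j u ∧
        (time i j u = ⊤ ↔ gfT depth parent (time i j) u = ⊤) ∧
        (time i j u ≠ ⊤ → ((depth u + 1 : ℕ) : WithTop ℕ) ≤ gfT depth parent (time i j) u) ∧
        (u ≠ ρ i → time i j u ≠ ⊤ →
          gfT depth parent (time i j) (parent u) + 1 ≤ gfT depth parent (time i j) u) := by
      intro u hu harm
      have h0 : depth u = 0 := hrootd u hu
      have hgu : gfT depth parent (time i j) u = time i j u := gfT_root _ _ _ _ h0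
      refine ⟨hgu.le, by rw [hgu], ?_, ?_⟩
      · intro htm
        rw [hgu, h0]
        have := ((hSF i j hj).2.1 u harm htm).1
        simpa using this
      · intro hne _
        rw [harm] at hu
        exact absurd hu hne
    intro N
    induction N with
    | zero =>
      intro u hN harm
      exact rootcase u (hroot0 u (Nat.le_zero.mp hN)) harm
    | succ N ih =>
      intro u hN harm
      by_cases hu : u = ρ (arm u)
      · exact rootcase u hu harm
      · have harm' : arm (parent u) = i := by rw [hparent_arm]; exact harm
        have hd : depth u = depth (parent u) + 1 := hdepth u hu
        have hpN : depth (parent u) ≤ N := by omega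
        obtain ⟨P1, P2, P3, P4⟩ := ih (parent u) hpN harm'
        have hrec := gfT_rec depth parent (time i j) u hd
        have hu' : u ≠ ρ i := by rw [← harm]; exact hu
        have SF3 := (hSF i j hj).2.2 u harm hu'
        by_cases htm : time i j u = ⊤
        · have hC : ((2 * depth u : ℕ) : WithTop ℕ) ≤ time i j u := htm ▸ le_top
          have hgu : gfT depth parent (time i j) u = time i j u := by rw [hrec, if_pos hC]
          exact ⟨hgu.le, by rw [hgu], fun h => absurd htm h, fun _ h => absurd htm h⟩
        · have hptm : time i j (parent u) ≠ ⊤ := fun h => htm (SF3.1 h)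
          have htt : time i j (parent u) + 1 ≤ time i j u := SF3.2.1 htm
          by_cases hC : ((2 * depth u : ℕ) : WithTop ℕ) ≤ time i j u
          · have hgu : gfT depth parent (time i j) u = time i j u := by rw [hrec, if_pos hC]
            refine ⟨hgu.le, by rw [hgu], ?_, ?_⟩
            · intro _
              rw [hgu]
              refine le_trans ?_ hC
              have : depth u + 1 ≤ 2 * depth u := by omega
              exact_mod_cast Nat.cast_le.mpr this
            · intro _ _
              rw [hgu]
              calc gfT depth parent (time i j) (parent u) + 1
                  ≤ time i j (parent u) + 1 := add_le_add_left P1 1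
                _ ≤ time i j u := htt
          · have hgu : gfT depth parent (time i j) u
                = gfT depth parent (time i j) (parent u) + 1 := by rw [hrec, if_neg hC]
            have hq1 : gfT depth parent (time i j) u ≤ time i j u := by
              rw [hgu]; exact le_trans (add_le_add_left P1 1) htt
            have hgp_ne : gfT depth parent (time i j) (parent u) ≠ ⊤ :=
              fun h => hptm (P2.mpr h)
            refine ⟨hq1, ?_, ?_, ?_⟩
            · constructor
              · intro h; exact absurd h htm
              · intro h
                rw [hgu] at h
                rcases WithTop.add_eq_top.mp h with h' | h'
                · exact absurd h' hgp_ne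
                · exact absurd h' (by simp)
            · intro _
              rw [hgu, hd]
              have h3 := P3 hptm
              have : ((depth (parent u) + 1 + 1 : ℕ) : WithTop ℕ)
                  = ((depth (parent u) + 1 : ℕ) : WithTop ℕ) + 1 := by push_cast; ring
              rw [this]
              exact add_le_add_left h3 1
            · intro _ _
              rw [hgu]
  have Qs : ∀ (i : Fin n) (j : ℕ), j < J i → ∀ (u : S), arm u = i →
      gfT depth parent (time i j) u ≤ time i j u ∧
      (time i j u = ⊤ ↔ gfT depth parent (time i j) u = ⊤) ∧
      (time i j u ≠ ⊤ → ((depth u + 1 : ℕ) : WithTop ℕ) ≤ gfT depth parent (time i j) u) ∧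
      (u ≠ ρ i → time i j u ≠ ⊤ →
        gfT depth parent (time i j) (parent u) + 1 ≤ gfT depth parent (time i j) u) :=
    fun i j hj u harm => Q i j hj (depth u) u le_rfl harm
  have PLY : ∀ (i : Fin n) (j : ℕ), j < J i → ∀ (m : ℕ) (u : S), arm u = i →
      time i j u ≠ ⊤ → m ≤ depth u →
      arm (parent^[m] u) = i ∧ depth (parent^[m] u) = depth u - m ∧
        time i j (parent^[m] u) ≠ ⊤ := by
    intro i j hj m
    induction m with
    | zero => intro u harm htm _; simpa using ⟨harm, htm⟩
    | succ m ih =>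
      intro u harm htm hm
      obtain ⟨a1, a2, a3⟩ := ih u harm htm (by omega)
      have hw_ne : parent^[m] u ≠ ρ (arm (parent^[m] u)) := by
        intro h
        have h0 := hrootd _ h
        omega
      have hd : depth (parent^[m] u) = depth (parent (parent^[m] u)) + 1 :=
        hdepth _ hw_ne
      have SF3w := (hSF i j hj).2.2 (parent^[m] u) a1 (by rw [← a1]; exact hw_ne)
      refine ⟨?_, ?_, ?_⟩
      · rw [Function.iterate_succ_apply', hparent_arm]; exact a1
      · rw [Function.iterate_succ_apply']; omega
      · rw [Function.iterate_succ_apply']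
        intro h
        exact a3 (SF3w.1 h)
  have MONO : ∀ (i : Fin n) (j : ℕ), j < J i → ∀ (m : ℕ) (u : S), arm u = i →
      time i j u ≠ ⊤ → m ≤ depth u →
      gfT depth parent (time i j) (parent^[m] u) + (m : WithTop ℕ)
        ≤ gfT depth parent (time i j) u := by
    intro i j hj m
    induction m with
    | zero => intro u harm htm _; simp
    | succ m ih =>
      intro u harm htm hm
      obtain ⟨a1, a2, a3⟩ := PLY i j hj m u harm htm (by omega)
      have hw_ne : parent^[m] u ≠ ρ (arm (parent^[m] u)) := by
        intro h
        have h0 := hrootd _ h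
        omega
      have hq5 := (Qs i j hj (parent^[m] u) a1).2.2.2 (by rw [← a1]; exact hw_ne) a3
      have step : gfT depth parent (time i j) (parent^[m+1] u) + ((m+1 : ℕ) : WithTop ℕ)
          ≤ gfT depth parent (time i j) (parent^[m] u) + (m : WithTop ℕ) := by
        rw [Function.iterate_succ_apply']
        have hc : ((m+1 : ℕ) : WithTop ℕ) = 1 + (m : WithTop ℕ) := by push_cast; ring
        rw [hc, ← add_assoc]
        exact add_le_add_left hq5 _
      exact le_trans step (ih u harm htm (by omega))
  have STB : ∀ (i : Fin n) (j : ℕ), j < J i → ∀ (u : S), arm u = i → time i j u ≠ ⊤ →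
      time i j u = gfT depth parent (time i j) u ∨
        time i j u + 1 ≤ ((2 * depth u : ℕ) : WithTop ℕ) := by
    intro i j hj u harm htm
    by_cases hu : u = ρ (arm u)
    · exact Or.inl (gfT_root _ _ _ _ (hrootd u hu)).symm
    · have hrec := gfT_rec depth parent (time i j) u (hdepth u hu)
      by_cases hC : ((2 * depth u : ℕ) : WithTop ℕ) ≤ time i j u
      · exact Or.inl (by rw [hrec, if_pos hC])
      · right
        obtain ⟨su, hsu⟩ := exists_natCast htm
        rw [hsu]
        rw [hsu] at hC
        have h1 : su < 2 * depth u := by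
          have := not_le.mp hC
          exact_mod_cast this
        have h2 : su + 1 ≤ 2 * depth u := h1
        have : ((su + 1 : ℕ) : WithTop ℕ) ≤ ((2 * depth u : ℕ) : WithTop ℕ) :=
          Nat.cast_le.mpr h2
        calc (su : WithTop ℕ) + 1 = ((su + 1 : ℕ) : WithTop ℕ) := by push_cast; ring
          _ ≤ _ := this
  have ANTI : ∀ (i : Fin n) (j : ℕ), j < J i → ∀ (tt k : ℕ) (v : S), arm v = i →
      time i j v ≠ ⊤ →
      ∑ u ∈ univ.filter (fun u => arm u = i ∧ depth v ≤ depth u ∧ depth u ≤ depth v + k ∧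
          parent^[depth u - depth v] u = v ∧
          gfT depth parent (time i j) u = (tt : WithTop ℕ)), prob i j u
        ≤ prob i j v := by
    intro i j hj tt k
    induction k with
    | zero =>
      intro v harm htm
      refine le_trans (sum_le_sum_of_subset_of_nonneg ?_ ?_) (le_of_eq (sum_singleton _ _))
      · intro u hu
        simp only [mem_filter, mem_univ, true_and] at hu
        obtain ⟨_, h1, h2, h3, _⟩ := hu
        have : depth u - depth v = 0 := by omega
        rw [this] at h3
        simp only [Function.iterate_zero_apply] at h3
        simp [h3]
      · intro x hx _
        simp only [mem_singleton] at hx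
        rw [hx]
        exact (hSF i j hj).1 v harm
    | succ k ih =>
      intro v harm htm
      have hplayed : ∀ u : S, gfT depth parent (time i j) u = (tt : WithTop ℕ) →
          arm u = i → time i j u ≠ ⊤ := by
        intro u hg ha htm'
        have := ((Qs i j hj u ha).2.1).mp htm'
        rw [hg] at this
        exact absurd this (by simp)
      by_cases hgv : gfT depth parent (time i j) v = (tt : WithTop ℕ)
      · -- the set is contained in {v}
        refine le_trans (sum_le_sum_of_subset_of_nonneg ?_ ?_) (le_of_eq (sum_singleton _ _))
        · intro u hu
          simp only [mem_filter, mem_univ, true_and] at hu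
          obtain ⟨ha, h1, h2, h3, h4⟩ := hu
          by_cases hde : depth u = depth v
          · have : depth u - depth v = 0 := by omega
            rw [this] at h3
            simp only [Function.iterate_zero_apply] at h3
            simp [h3]
          · exfalso
            have hm1 : 1 ≤ depth u - depth v := by omega
            have htm' : time i j u ≠ ⊤ := hplayed u h4 ha
            have hmono := MONO i j hj (depth u - depth v) u ha htm' (by omega)
            rw [h3, hgv, h4] at hmono
            have : ((tt + (depth u - depth v) : ℕ) : WithTop ℕ) ≤ ((tt : ℕ) : WithTop ℕ) := by
              calc ((tt + (depth u - depth v) : ℕ) : WithTop ℕ)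
                  = ((tt : ℕ) : WithTop ℕ) + ((depth u - depth v : ℕ) : WithTop ℕ) := by
                    push_cast; ring
                _ ≤ _ := hmono
            have := Nat.cast_le.mp this
            omega
        · intro x hx _
          simp only [mem_singleton] at hx
          rw [hx]
          exact (hSF i j hj).1 v harm
      · -- group by the children of v
        set Aset := univ.filter (fun u => arm u = i ∧ depth v ≤ depth u ∧
            depth u ≤ depth v + (k+1) ∧ parent^[depth u - depth v] u = v ∧
            gfT depth parent (time i j) u = (tt : WithTop ℕ)) with hAset
        set C := univ.filter (fun c => arm c = i ∧ parent c = v ∧ c ≠ ρ i ∧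
            time i j c ≠ ⊤) with hCdef
        have hdeep : ∀ u ∈ Aset, depth v + 1 ≤ depth u := by
          intro u hu
          simp only [hAset, mem_filter, mem_univ, true_and] at hu
          obtain ⟨ha, h1, h2, h3, h4⟩ := hu
          by_contra hcon
          have hde : depth u = depth v := by omega
          have : depth u - depth v = 0 := by omega
          rw [this] at h3
          simp only [Function.iterate_zero_apply] at h3
          rw [h3] at h4
          exact hgv h4
        have hfacts : ∀ u ∈ Aset,
            arm (parent^[depth u - (depth v + 1)] u) = i ∧
            depth (parent^[depth u - (depth v + 1)] u) = depth v + 1 ∧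
            time i j (parent^[depth u - (depth v + 1)] u) ≠ ⊤ := by
          intro u hu
          have hd1 := hdeep u hu
          simp only [hAset, mem_filter, mem_univ, true_and] at hu
          obtain ⟨ha, h1, h2, h3, h4⟩ := hu
          have htm' : time i j u ≠ ⊤ := hplayed u h4 ha
          obtain ⟨a1, a2, a3⟩ := PLY i j hj (depth u - (depth v + 1)) u ha htm' (by omega)
          exact ⟨a1, by omega, a3⟩
        have hmaps : ∀ u ∈ Aset, parent^[depth u - (depth v + 1)] u ∈ C := by
          intro u hu
          obtain ⟨a1, a2, a3⟩ := hfacts u hu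
          have hd1 := hdeep u hu
          simp only [hAset, mem_filter, mem_univ, true_and] at hu
          obtain ⟨ha, h1, h2, h3, h4⟩ := hu
          simp only [hCdef, mem_filter, mem_univ, true_and]
          refine ⟨a1, ?_, ?_, a3⟩
          · rw [← Function.iterate_succ_apply' parent, Nat.succ_eq_add_one,
              show depth u - (depth v + 1) + 1 = depth u - depth v from by omega]
            exact h3
          · intro hroot
            have := hdepth_root i
            rw [← hroot] at this
            omega
        calc ∑ u ∈ Aset, prob i j u
            = ∑ c ∈ C, ∑ u ∈ Aset.filter
                (fun u => parent^[depth u - (depth v + 1)] u = c), prob i j u :=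
              (sum_fiberwise_of_maps_to hmaps _).symm
          _ ≤ ∑ c ∈ C, prob i j c := by
              refine sum_le_sum ?_
              intro c hc
              simp only [hCdef, mem_filter, mem_univ, true_and] at hc
              obtain ⟨hca, hcp, hcr, hct⟩ := hc
              refine le_trans (sum_le_sum_of_subset_of_nonneg ?_ ?_) (ih c hca hct)
              · intro u hu
                simp only [mem_filter] at hu
                obtain ⟨huA, hupsi⟩ := hu
                obtain ⟨a1, a2, a3⟩ := hfacts u huA
                have hdc : depth c = depth v + 1 := by rw [← hupsi]; exact a2
                have hd1 := hdeep u huA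
                simp only [hAset, mem_filter, mem_univ, true_and] at huA
                obtain ⟨ha, h1, h2, h3, h4⟩ := huA
                simp only [mem_filter, mem_univ, true_and]
                refine ⟨ha, by omega, by omega, ?_, h4⟩
                rw [show depth u - depth c = depth u - (depth v + 1) from by omega]
                exact hupsi
              · intro x hx _
                simp only [mem_filter, mem_univ, true_and] at hx
                exact (hSF i j hj).1 x hx.1
          _ = ∑ c ∈ C, p c * prob i j v := by
              refine sum_congr rfl ?_
              intro c hc
              simp only [hCdef, mem_filter, mem_univ, true_and] at hc
              obtain ⟨hca, hcp, hcr, hct⟩ := hc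
              have := ((hSF i j hj).2.2 c hca hcr).2.2.1 hct
              rw [this, hcp]
          _ = (∑ c ∈ C, p c) * prob i j v := (sum_mul _ _ _).symm
          _ ≤ 1 * prob i j v := by
              refine mul_le_mul_of_nonneg_right ?_ ((hSF i j hj).1 v harm)
              refine le_trans (sum_le_sum_of_subset_of_nonneg ?_ ?_) (hpsum v)
              · intro c hc
                simp only [hCdef, mem_filter, mem_univ, true_and] at hc
                obtain ⟨hca, hcp, hcr, hct⟩ := hc
                simp only [mem_filter, mem_univ, true_and]
                exact ⟨by rw [hca]; exact hcr, hcp⟩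
              · intro x _ _
                exact (hp x).1
          _ = prob i j v := one_mul _
  refine ⟨fun i j u => gfT depth parent (time i j) u, ?_, ?_, ?_, ?_⟩
  · -- bullet 1
    intro i j hj u harm
    obtain ⟨q1, q2, _, _⟩ := Qs i j hj u harm
    exact ⟨q1, q2.symm⟩
  · -- bullet 2 : strategy forest
    intro i j hj
    obtain ⟨SF1, SF2, SF3⟩ := hSF i j hj
    refine ⟨SF1, ?_, ?_⟩
    · intro u harm hne
      have htm : time i j u ≠ ⊤ := fun h => hne (((Qs i j hj u harm).2.1).mp h)
      obtain ⟨q1, _, q3, _⟩ := Qs i j hj u harm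
      constructor
      · refine le_trans ?_ (q3 htm)
        have : ((1 : ℕ) : WithTop ℕ) ≤ ((depth u + 1 : ℕ) : WithTop ℕ) :=
          Nat.cast_le.mpr (by omega)
        simpa using this
      · exact le_trans q1 ((SF2 u harm htm).2)
    · intro u harm hne
      have harm' : arm (parent u) = i := by rw [hparent_arm]; exact harm
      obtain ⟨q1, q2, q3, q4⟩ := Qs i j hj u harm
      obtain ⟨p1, p2, p3, p4⟩ := Qs i j hj (parent u) harm'
      obtain ⟨s1, s2, s3, s4⟩ := SF3 u harm hne
      refine ⟨?_, ?_, ?_, ?_⟩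
      · intro h
        exact q2.mp (s1 (p2.mpr h))
      · intro h
        exact q4 hne (fun h' => h (q2.mp h'))
      · intro h
        exact s3 (fun h' => h (q2.mp h'))
      · intro h
        exact s4 (q2.mpr h)
  · -- bullet 3 : heads
    intro i j hj u harm hne h hhead
    obtain ⟨⟨k, hk, hchain⟩, hbreak⟩ := hhead
    replace hne : gfT depth parent (time i j) u ≠ ⊤ := hne
    replace hbreak : gfT depth parent (time i j) h ≠
        gfT depth parent (time i j) (parent h) + 1 := hbreak
    replace hchain : ∀ m < k, gfT depth parent (time i j) (parent^[m] u) =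
        gfT depth parent (time i j) (parent^[m+1] u) + 1 := hchain
    show ((2 * depth h : ℕ) : WithTop ℕ) ≤ gfT depth parent (time i j) h
    have hfin : ∀ m, m ≤ k → gfT depth parent (time i j) (parent^[m] u) ≠ ⊤ := by
      intro m
      induction m with
      | zero => intro _; simpa using hne
      | succ m ihm =>
        intro hmk
        have h1 := ihm (by omega)
        have h2 := hchain m (by omega)
        rw [h2] at h1
        intro hcon
        rw [hcon] at h1
        simp at h1
    have hgh : gfT depth parent (time i j) h ≠ ⊤ := by
      rw [← hk]; exact hfin k le_rfl
    have harmh : arm h = i := by rw [← hk, harmIt]; exact harm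
    have htmh : time i j h ≠ ⊤ := fun h' => hgh (((Qs i j hj h harmh).2.1).mp h')
    by_cases hr : h = ρ (arm h)
    · have h0 : depth h = 0 := hrootd h hr
      rw [h0]
      simp
    · have hrec := gfT_rec depth parent (time i j) h (hdepth h hr)
      by_cases hC : ((2 * depth h : ℕ) : WithTop ℕ) ≤ time i j h
      · rw [hrec, if_pos hC]
        exact hC
      · exfalso
        rw [hrec, if_neg hC] at hbreak
        exact hbreak rfl
  · -- bullet 4 : load
    intro t ht
    obtain ⟨ht1, htB⟩ := mem_Icc.mp ht
    show (∑ u : S, ∑ j ∈ (range (J (arm u))).filter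
        (fun j => gfT depth parent (time (arm u) j) u = (t : WithTop ℕ)),
        prob (arm u) j u) ≤ 3
    set D1 : ℕ := (t+1)/2 with hD1
    set K : ℕ := D1 + 1 with hK
    set JM : ℕ := Finset.univ.sup J with hJM
    have hJMle : ∀ i : Fin n, J i ≤ JM := fun i => Finset.le_sup (mem_univ i)
    set base : Finset (S × ℕ) := Finset.univ ×ˢ range JM with hbase
    -- conversion between pair sums and double sums
    have conv : ∀ (P : S → ℕ → Prop) [inst : ∀ u j, Decidable (P u j)],
        ∑ q ∈ base.filter (fun q => q.2 < J (arm q.1) ∧ P q.1 q.2),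
            prob (arm q.1) q.2 q.1
          = ∑ u : S, ∑ j ∈ (range (J (arm u))).filter (fun j => P u j),
              prob (arm u) j u := by
      intro P inst
      rw [sum_filter, hbase, sum_product]
      refine sum_congr rfl ?_
      intro u _
      rw [sum_filter]
      rw [← sum_subset (s₁ := range (J (arm u))) (s₂ := range JM)
        (fun j hj' => by
          simp only [mem_range] at hj' ⊢
          exact lt_of_lt_of_le hj' (hJMle (arm u)))]
      · refine sum_congr rfl ?_
        intro j hj'
        simp only [mem_range] at hj'
        simp [hj']
      · intro j _ hj'
        simp only [mem_range] at hj'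
        simp [hj']
    -- split the target sum into stationary and moved parts
    have split : ∀ u : S,
        (∑ j ∈ (range (J (arm u))).filter
          (fun j => gfT depth parent (time (arm u) j) u = (t : WithTop ℕ)),
          prob (arm u) j u)
        = (∑ j ∈ (range (J (arm u))).filter
            (fun j => gfT depth parent (time (arm u) j) u = (t : WithTop ℕ) ∧
              time (arm u) j u = (t : WithTop ℕ)), prob (arm u) j u)
          + (∑ j ∈ (range (J (arm u))).filter
            (fun j => gfT depth parent (time (arm u) j) u = (t : WithTop ℕ) ∧
              ¬(time (arm u) j u = (t : WithTop ℕ))), prob (arm u) j u) := by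
      intro u
      rw [← sum_filter_add_sum_filter_not
        ((range (J (arm u))).filter
          (fun j => gfT depth parent (time (arm u) j) u = (t : WithTop ℕ)))
        (fun j => time (arm u) j u = (t : WithTop ℕ))]
      rw [filter_filter, filter_filter]
    have hstat : (∑ u : S, ∑ j ∈ (range (J (arm u))).filter
          (fun j => gfT depth parent (time (arm u) j) u = (t : WithTop ℕ) ∧
            time (arm u) j u = (t : WithTop ℕ)), prob (arm u) j u) ≤ 1 := by
      refine le_trans (sum_le_sum ?_) (hload t ht)
      intro u _
      refine sum_le_sum_of_subset_of_nonneg ?_ ?_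
      · intro j hj'
        simp only [mem_filter, mem_range] at hj' ⊢
        exact ⟨hj'.1, hj'.2.2⟩
      · intro j hj' _
        simp only [mem_filter, mem_range] at hj'
        exact (hSF (arm u) j hj'.1).1 u rfl
    -- the moved part
    set MovP : Finset (S × ℕ) := base.filter (fun q => q.2 < J (arm q.1) ∧
        (gfT depth parent (time (arm q.1) q.2) q.1 = (t : WithTop ℕ) ∧
          ¬(time (arm q.1) q.2 q.1 = (t : WithTop ℕ)))) with hMovP
    have hmovEq : (∑ u : S, ∑ j ∈ (range (J (arm u))).filter
          (fun j => gfT depth parent (time (arm u) j) u = (t : WithTop ℕ) ∧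
            ¬(time (arm u) j u = (t : WithTop ℕ))), prob (arm u) j u)
        = ∑ q ∈ MovP, prob (arm q.1) q.2 q.1 := by
      have h0 := (conv (fun u j => gfT depth parent (time (arm u) j) u = (t : WithTop ℕ) ∧
        ¬(time (arm u) j u = (t : WithTop ℕ)))).symm
      rw [hMovP]
      exact h0
    -- basic facts about each moved pair
    have hmovFacts : ∀ q ∈ MovP, time (arm q.1) q.2 q.1 ≠ ⊤ ∧ D1 ≤ depth q.1 ∧
        (∀ d, d ≤ D1 →
          arm (parent^[depth q.1 - d] q.1) = arm q.1 ∧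
          depth (parent^[depth q.1 - d] q.1) = d ∧
          time (arm q.1) q.2 (parent^[depth q.1 - d] q.1) ≠ ⊤ ∧
          (1 : WithTop ℕ) ≤ time (arm q.1) q.2 (parent^[depth q.1 - d] q.1) ∧
          time (arm q.1) q.2 (parent^[depth q.1 - d] q.1) ≤ (t : WithTop ℕ)) := by
      intro q hq
      simp only [hMovP, mem_filter] at hq
      obtain ⟨_, hjJ, hg, hnt⟩ := hq
      obtain ⟨u, j⟩ := q
      simp only at hjJ hg hnt ⊢
      have htm : time (arm u) j u ≠ ⊤ := by
        intro h'
        have := ((Qs (arm u) j hjJ u rfl).2.1).mp h'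
        rw [hg] at this
        exact absurd this (by simp)
      obtain ⟨su, hsu⟩ := exists_natCast htm
      have hq1 := (Qs (arm u) j hjJ u rfl).1
      rw [hg, hsu] at hq1
      have htsu : t ≤ su := Nat.cast_le.mp hq1
      have hsunt : su ≠ t := by
        intro h'
        rw [h'] at hsu
        exact hnt hsu
      have hu : u ≠ ρ (arm u) := by
        intro h'
        have := gfT_root depth parent (time (arm u) j) u (hrootd u h')
        rw [hg] at this
        exact hnt this.symm
      have hrec := gfT_rec depth parent (time (arm u) j) u (hdepth u hu)
      have hC : ¬(((2 * depth u : ℕ) : WithTop ℕ) ≤ time (arm u) j u) := by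
        intro hC'
        rw [if_pos hC'] at hrec
        rw [← hrec] at hsu
        rw [hg] at hsu
        have : t = su := Nat.cast_inj.mp hsu
        omega
      have hlt : su < 2 * depth u := by
        rw [hsu] at hC
        have := not_le.mp hC
        exact_mod_cast this
      have hDu : D1 ≤ depth u := by omega
      refine ⟨htm, hDu, ?_⟩
      intro d hd
      have hddep : d ≤ depth u := le_trans hd hDu
      obtain ⟨a1, a2, a3⟩ := PLY (arm u) j hjJ (depth u - d) u rfl htm (by omega)
      have ha2 : depth (parent^[depth u - d] u) = d := by omega
      refine ⟨a1, ha2, a3, ?_, ?_⟩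
      · exact ((hSF (arm u) j hjJ).2.1 _ a1 a3).1
      · -- the crucial slot bound
        have hmono := MONO (arm u) j hjJ (depth u - d) u rfl htm (by omega)
        rw [hg] at hmono
        have hgw : gfT depth parent (time (arm u) j) (parent^[depth u - d] u)
            ≤ (t : WithTop ℕ) := le_trans le_self_add hmono
        rcases STB (arm u) j hjJ _ a1 a3 with hstb | hstb
        · rw [hstb]; exact hgw
        · obtain ⟨sw, hsw⟩ := exists_natCast a3
          rw [hsw]
          rw [hsw, ha2] at hstb
          have h1 : sw + 1 ≤ 2 * d := by
            have : ((sw + 1 : ℕ) : WithTop ℕ) ≤ ((2 * d : ℕ) : WithTop ℕ) := by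
              calc ((sw + 1 : ℕ) : WithTop ℕ) = (sw : WithTop ℕ) + 1 := by push_cast; ring
                _ ≤ _ := hstb
            exact_mod_cast this
          have : sw ≤ t := by omega
          exact Nat.cast_le.mpr this
    -- the collection of ancestors
    set AncAll : Finset (S × ℕ) := base.filter (fun r => r.2 < J (arm r.1) ∧
        time (arm r.1) r.2 r.1 ≠ ⊤ ∧ (1 : WithTop ℕ) ≤ time (arm r.1) r.2 r.1 ∧
        time (arm r.1) r.2 r.1 ≤ (t : WithTop ℕ)) with hAncAll
    have hAncNonneg : ∀ r ∈ AncAll, 0 ≤ prob (arm r.1) r.2 r.1 := by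
      intro r hr
      simp only [hAncAll, mem_filter] at hr
      exact (hSF (arm r.1) r.2 hr.2.1).1 r.1 rfl
    -- per-level fiberwise bound
    have hlevel : ∀ d, d < K → (∑ q ∈ MovP, prob (arm q.1) q.2 q.1)
        ≤ ∑ r ∈ AncAll.filter (fun r => depth r.1 = d), prob (arm r.1) r.2 r.1 := by
      intro d hdK
      have hdD1 : d ≤ D1 := by omega
      have hmaps : ∀ q ∈ MovP, (parent^[depth q.1 - d] q.1, q.2)
          ∈ AncAll.filter (fun r => depth r.1 = d) := by
        intro q hq
        obtain ⟨htm, hDu, hanc⟩ := hmovFacts q hq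
        obtain ⟨a1, a2, a3, a4, a5⟩ := hanc d hdD1
        have hqb : q.2 < JM := by
          have hb := (mem_filter.mp hq).1
          rw [hbase] at hb
          simpa using (mem_product.mp hb).2
        obtain ⟨hqJ, hqg, hqnt⟩ := (mem_filter.mp hq).2
        refine mem_filter.mpr ⟨mem_filter.mpr ⟨?_, ?_⟩, a2⟩
        · rw [hbase]; exact mem_product.mpr ⟨mem_univ _, mem_range.mpr hqb⟩
        · exact ⟨by rw [a1]; exact hqJ, by rw [a1]; exact a3,
            by rw [a1]; exact a4, by rw [a1]; exact a5⟩
      calc (∑ q ∈ MovP, prob (arm q.1) q.2 q.1)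
          = ∑ r ∈ AncAll.filter (fun r => depth r.1 = d),
              ∑ q ∈ MovP.filter (fun q => (parent^[depth q.1 - d] q.1, q.2) = r),
                prob (arm q.1) q.2 q.1 :=
            (sum_fiberwise_of_maps_to hmaps _).symm
        _ ≤ ∑ r ∈ AncAll.filter (fun r => depth r.1 = d), prob (arm r.1) r.2 r.1 := by
            refine sum_le_sum ?_
            intro r hr
            have hrA : r ∈ AncAll := mem_of_mem_filter r hr
            have hdr : depth r.1 = d := by
              simp only [mem_filter] at hr
              exact hr.2
            simp only [hAncAll, mem_filter] at hrA
            obtain ⟨_, hrJ, hrtm, _, _⟩ := hrA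
            -- reduce the fiber to a sum over states and apply ANTI
            have harms : ∀ q ∈ MovP.filter
                (fun q => (parent^[depth q.1 - d] q.1, q.2) = r),
                arm q.1 = arm r.1 ∧ q.2 = r.2 := by
              intro q hq'
              simp only [mem_filter, Prod.ext_iff] at hq'
              obtain ⟨_, hfst, hsnd⟩ := hq'
              constructor
              · rw [← hfst, harmIt]
              · exact hsnd
            have hinj : ∀ q ∈ MovP.filter
                (fun q => (parent^[depth q.1 - d] q.1, q.2) = r),
                ∀ q' ∈ MovP.filter
                (fun q => (parent^[depth q.1 - d] q.1, q.2) = r),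
                q.1 = q'.1 → q = q' := by
              intro q hq' q' hq'' heq
              have e1 := (harms q hq').2
              have e2 := (harms q' hq'').2
              exact Prod.ext heq (by rw [e1, e2])
            calc (∑ q ∈ MovP.filter
                  (fun q => (parent^[depth q.1 - d] q.1, q.2) = r),
                  prob (arm q.1) q.2 q.1)
                = ∑ q ∈ MovP.filter
                    (fun q => (parent^[depth q.1 - d] q.1, q.2) = r),
                    prob (arm r.1) r.2 q.1 := by
                  refine sum_congr rfl ?_
                  intro q hq'
                  obtain ⟨e1, e2⟩ := harms q hq'
                  rw [e1, e2]
              _ = ∑ u ∈ (MovP.filter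
                    (fun q => (parent^[depth q.1 - d] q.1, q.2) = r)).image Prod.fst,
                    prob (arm r.1) r.2 u := (sum_image hinj).symm
              _ ≤ prob (arm r.1) r.2 r.1 := by
                  refine le_trans (sum_le_sum_of_subset_of_nonneg ?_ ?_)
                    (ANTI (arm r.1) r.2 hrJ t (Finset.univ.sup depth) r.1 rfl hrtm)
                  · intro u hu
                    simp only [mem_image] at hu
                    obtain ⟨q, hq', rfl⟩ := hu
                    obtain ⟨e1, e2⟩ := harms q hq'
                    simp only [mem_filter, Prod.ext_iff] at hq'
                    obtain ⟨hqM, hfst, hsnd⟩ := hq'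
                    obtain ⟨htm', hDu, hanc⟩ := hmovFacts q hqM
                    simp only [hMovP, mem_filter] at hqM
                    obtain ⟨_, hqJ, hqg, hqnt⟩ := hqM
                    simp only [mem_filter, mem_univ, true_and]
                    have hdq : d ≤ depth q.1 := le_trans hdD1 hDu
                    refine ⟨e1, ?_, ?_, ?_, ?_⟩
                    · rw [hdr]; exact hdq
                    · exact le_trans (Finset.le_sup (mem_univ q.1)) (by omega)
                    · rw [hdr, hfst]
                    · rw [← e1, ← e2]; exact hqg
                  · intro u hu _
                    exact (hSF (arm r.1) r.2 hrJ).1 u (mem_filter.mp hu).2.1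
    -- summing the ancestor masses over the levels
    have hsumlevels : (∑ d ∈ range K, ∑ r ∈ AncAll.filter (fun r => depth r.1 = d),
          prob (arm r.1) r.2 r.1)
        ≤ ∑ r ∈ AncAll, prob (arm r.1) r.2 r.1 := by
      rw [sum_fiberwise_eq_sum_filter]
      exact sum_le_sum_of_subset_of_nonneg (filter_subset _ _)
        (fun r hr _ => hAncNonneg r hr)
    -- the total ancestor mass is at most t
    have hancmass : (∑ r ∈ AncAll, prob (arm r.1) r.2 r.1) ≤ (t : ℝ) := by
      have hmaps : ∀ r ∈ AncAll,
          (time (arm r.1) r.2 r.1).untopD 0 ∈ Icc 1 t := by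
        intro r hr
        simp only [hAncAll, mem_filter] at hr
        obtain ⟨_, _, hrtm, hr1, hrt⟩ := hr
        obtain ⟨sr, hsr⟩ := exists_natCast hrtm
        rw [hsr, Nat.cast_withTop]
        simp only [WithTop.untopD_coe, mem_Icc]
        rw [hsr] at hr1 hrt
        constructor
        · have : ((1 : ℕ) : WithTop ℕ) ≤ (sr : WithTop ℕ) := by
            simpa using hr1
          exact_mod_cast this
        · exact_mod_cast hrt
      rw [← sum_fiberwise_of_maps_to hmaps]
      have hper : ∀ s ∈ Icc 1 t,
          (∑ r ∈ AncAll.filter (fun r => (time (arm r.1) r.2 r.1).untopD 0 = s),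
            prob (arm r.1) r.2 r.1) ≤ 1 := by
        intro s hs
        obtain ⟨hs1, hst⟩ := mem_Icc.mp hs
        have hsub : AncAll.filter (fun r => (time (arm r.1) r.2 r.1).untopD 0 = s)
            ⊆ base.filter (fun q => q.2 < J (arm q.1) ∧
              time (arm q.1) q.2 q.1 = ((s : ℕ) : WithTop ℕ)) := by
          intro r hr
          simp only [mem_filter, hAncAll] at hr ⊢
          obtain ⟨⟨hrb, hrJ, hrtm, _, _⟩, hru⟩ := hr
          refine ⟨hrb, hrJ, ?_⟩
          obtain ⟨sr, hsr⟩ := exists_natCast hrtm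
          rw [hsr, Nat.cast_withTop] at hru
          simp only [WithTop.untopD_coe] at hru
          rw [hsr, hru]
        refine le_trans (sum_le_sum_of_subset_of_nonneg hsub ?_) ?_
        · intro q hq _
          simp only [mem_filter] at hq
          exact (hSF (arm q.1) q.2 hq.2.1).1 q.1 rfl
        · have h0 := conv (fun u j => time (arm u) j u = ((s : ℕ) : WithTop ℕ))
          rw [h0]
          exact hload s (mem_Icc.mpr ⟨hs1, le_trans hst htB⟩)
      calc (∑ s ∈ Icc 1 t, ∑ r ∈ AncAll.filter
            (fun r => (time (arm r.1) r.2 r.1).untopD 0 = s),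
            prob (arm r.1) r.2 r.1)
          ≤ ∑ _s ∈ Icc 1 t, (1 : ℝ) := sum_le_sum hper
        _ = (t : ℝ) := by
            rw [sum_const, Nat.card_Icc]
            simp
    -- conclude the moved mass is at most 2
    have hmov2 : (∑ q ∈ MovP, prob (arm q.1) q.2 q.1) ≤ 2 := by
      have hKmul : (K : ℝ) * (∑ q ∈ MovP, prob (arm q.1) q.2 q.1) ≤ (t : ℝ) := by
        calc (K : ℝ) * (∑ q ∈ MovP, prob (arm q.1) q.2 q.1)
            = ∑ _d ∈ range K, ∑ q ∈ MovP, prob (arm q.1) q.2 q.1 := by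
              rw [sum_const, card_range, nsmul_eq_mul]
          _ ≤ ∑ d ∈ range K, ∑ r ∈ AncAll.filter (fun r => depth r.1 = d),
              prob (arm r.1) r.2 r.1 := by
              refine sum_le_sum ?_
              intro d hd
              exact hlevel d (mem_range.mp hd)
          _ ≤ ∑ r ∈ AncAll, prob (arm r.1) r.2 r.1 := hsumlevels
          _ ≤ (t : ℝ) := hancmass
      have hKt : (t : ℝ) ≤ 2 * (K : ℝ) := by
        have : t ≤ 2 * K := by omega
        exact_mod_cast this
      have hKpos : (1 : ℝ) ≤ (K : ℝ) := by
        have : 1 ≤ K := by omega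
        exact_mod_cast this
      nlinarith [hKmul, hKt, hKpos]
    -- put everything together
    calc (∑ u : S, ∑ j ∈ (range (J (arm u))).filter
          (fun j => gfT depth parent (time (arm u) j) u = (t : WithTop ℕ)),
          prob (arm u) j u)
        = (∑ u : S, ∑ j ∈ (range (J (arm u))).filter
            (fun j => gfT depth parent (time (arm u) j) u = (t : WithTop ℕ) ∧
              time (arm u) j u = (t : WithTop ℕ)), prob (arm u) j u)
          + (∑ u : S, ∑ j ∈ (range (J (arm u))).filter
            (fun j => gfT depth parent (time (arm u) j) u = (t : WithTop ℕ) ∧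
              ¬(time (arm u) j u = (t : WithTop ℕ))), prob (arm u) j u) := by
          rw [← sum_add_distrib]
          exact sum_congr rfl (fun u _ => split u)
      _ ≤ 1 + 2 := by
          refine add_le_add hstat ?_
          rw [hmovEq]
          exact hmov2
      _ = 3 := by norm_num
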